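/- Let a, b, c be pairwise distinct real numbers and let α, β, γ all be nonzero. Then R_{α,β,γ} = { (x, βx/(2(a−b)x+α), γx/(2(a−c)x+α)) : x ∈ ℝ, 2(a−b)x+α ≠ 0 and 2(a−c)x+α ≠ 0 }. In particular the set of relative equilibria of a generic deformation is the disjoint union of three smooth curve pieces (corresponding to the three intervals of x between the two excluded values), one of which passes through the origin. -/

import Mathlib

open Matrix Module

/-- If some 2×2 minor of a 2×3 matrix is nonzero, the rank is at least 2. -/
lemma aux_two_le_rank (M : Matrix (Fin 2) (Fin 3) ℝ) (i j : Fin 3)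
    (h : M 0 i * M 1 j - M 0 j * M 1 i ≠ 0) : ¬ M.rank ≤ 1 := by
  intro hle
  set P : Matrix (Fin 3) (Fin 2) ℝ := Matrix.of fun k l => if k = ![i,j] l then 1 else 0 with hP
  have hMP : M * P = Matrix.of fun r l => M r (![i,j] l) := by
    ext r l
    simp [hP, Matrix.mul_apply]
  have hdet : (M * P).det ≠ 0 := by
    rw [hMP, Matrix.det_fin_two]
    simpa using h
  have hrk : (M * P).rank = 2 := by
    rw [Matrix.rank_of_isUnit (M*P) ((Matrix.isUnit_iff_isUnit_det _).mpr hdet.isUnit)]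
    simp
  have := Matrix.rank_mul_le_left M P
  omega

/-- If both rows of a 2×3 matrix are multiples of a single vector, the rank is at most 1. -/
lemma aux_rank_le_one_of_rows (M : Matrix (Fin 2) (Fin 3) ℝ) (v : Fin 3 → ℝ)
    (h0 : ∃ c : ℝ, M 0 = c • v) (h1 : ∃ c : ℝ, M 1 = c • v) : M.rank ≤ 1 := by
  rw [Matrix.rank_eq_finrank_span_row]
  have hle : Submodule.span ℝ (Set.range M) ≤ Submodule.span ℝ {v} := by
    rw [Submodule.span_le]
    rintro w ⟨i, rfl⟩
    fin_cases i
    · obtain ⟨c, hc⟩ := h0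
      simpa [hc] using Submodule.smul_mem _ c (Submodule.mem_span_singleton_self v)
    · obtain ⟨c, hc⟩ := h1
      simpa [hc] using Submodule.smul_mem _ c (Submodule.mem_span_singleton_self v)
  calc finrank ℝ (Submodule.span ℝ (Set.range M))
      ≤ finrank ℝ (Submodule.span ℝ ({v} : Set (Fin 3 → ℝ))) := Submodule.finrank_mono hle
    _ ≤ 1 := by simpa using finrank_span_le_card ({v} : Set (Fin 3 → ℝ))

/-- A 2×3 real matrix has rank at most 1 iff all three 2×2 minors vanish. -/
lemma aux_minors (M : Matrix (Fin 2) (Fin 3) ℝ) :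
    M.rank ≤ 1 ↔ (M 0 0 * M 1 1 = M 0 1 * M 1 0 ∧ M 0 0 * M 1 2 = M 0 2 * M 1 0 ∧
      M 0 1 * M 1 2 = M 0 2 * M 1 1) := by
  constructor
  · intro h
    refine ⟨?_, ?_, ?_⟩ <;> by_contra hne
    · exact aux_two_le_rank M 0 1 (sub_ne_zero.mpr hne) h
    · exact aux_two_le_rank M 0 2 (sub_ne_zero.mpr hne) h
    · exact aux_two_le_rank M 1 2 (sub_ne_zero.mpr hne) h
  · rintro ⟨h1, h2, h3⟩
    by_cases e0 : M 1 0 ≠ 0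
    · refine aux_rank_le_one_of_rows M (M 1) ⟨M 0 0 / M 1 0, ?_⟩ ⟨1, by simp⟩
      funext k; fin_cases k <;> simp <;> field_simp <;> linarith
    · push_neg at e0
      by_cases e1 : M 1 1 ≠ 0
      · refine aux_rank_le_one_of_rows M (M 1) ⟨M 0 1 / M 1 1, ?_⟩ ⟨1, by simp⟩
        funext k; fin_cases k <;> simp <;> field_simp <;> linarith
      · push_neg at e1
        by_cases e2 : M 1 2 ≠ 0
        · refine aux_rank_le_one_of_rows M (M 1) ⟨M 0 2 / M 1 2, ?_⟩ ⟨1, by simp⟩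
          funext k; fin_cases k <;> simp <;> field_simp <;> linarith
        · push_neg at e2
          refine aux_rank_le_one_of_rows M (M 0) ⟨1, by simp⟩ ⟨0, ?_⟩
          funext k; fin_cases k <;> simp [e0, e1, e2]

/-- For pairwise distinct `a b c` and `α β γ` all nonzero, the set of
relative equilibria `R_{α,β,γ}` is the graph-curve
`x ↦ (x, βx/(2(a−b)x+α), γx/(2(a−c)x+α))` over the set of `x` where both
denominators are nonzero. -/
theorem stmt_3 (a b c α β γ : ℝ) (hab : a ≠ b) (hbc : b ≠ c) (hac : a ≠ c)
    (hα : α ≠ 0) (hβ : β ≠ 0) (hγ : γ ≠ 0) :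
    {p : ℝ × ℝ × ℝ |
        (!![2*a*p.1 + α, 2*b*p.2.1 + β, 2*c*p.2.2 + γ; p.1, p.2.1, p.2.2] :
          Matrix (Fin 2) (Fin 3) ℝ).rank ≤ 1} =
      {q : ℝ × ℝ × ℝ | ∃ x : ℝ, 2*(a-b)*x + α ≠ 0 ∧ 2*(a-c)*x + α ≠ 0 ∧
        q = (x, β*x / (2*(a-b)*x + α), γ*x / (2*(a-c)*x + α))} := by
  ext ⟨x, y, z⟩
  simp only [Set.mem_setOf_eq, aux_minors]
  simp only [Matrix.cons_val', Matrix.cons_val_zero, Matrix.cons_val_one, Matrix.head_cons,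
    Matrix.empty_val', Matrix.cons_val_fin_one, Matrix.head_fin_const, Matrix.cons_val_two,
    Matrix.tail_cons, Matrix.of_apply]
  constructor
  · rintro ⟨h1, h2, h3⟩
    have k1 : (2*(a-b)*x + α) * y = β * x := by linear_combination h1
    have k2 : (2*(a-c)*x + α) * z = γ * x := by linear_combination h2
    have hD1 : 2*(a-b)*x + α ≠ 0 := by
      intro hD
      rw [hD, zero_mul] at k1
      have hx : x = 0 := by
        rcases mul_eq_zero.mp k1.symm with h | h
        · exact absurd h hβ
        · exact h
      rw [hx] at hD
      simp at hD
      exact hα hD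
    have hD2 : 2*(a-c)*x + α ≠ 0 := by
      intro hD
      rw [hD, zero_mul] at k2
      have hx : x = 0 := by
        rcases mul_eq_zero.mp k2.symm with h | h
        · exact absurd h hγ
        · exact h
      rw [hx] at hD
      simp at hD
      exact hα hD
    refine ⟨x, hD1, hD2, ?_⟩
    have hy : y = β * x / (2*(a-b)*x + α) := by rw [eq_div_iff hD1]; linear_combination k1
    have hz : z = γ * x / (2*(a-c)*x + α) := by rw [eq_div_iff hD2]; linear_combination k2
    simp [hy, hz]
  · rintro ⟨x', hD1, hD2, heq⟩
    obtain ⟨rfl, rfl, rfl⟩ : x = x' ∧ y = β * x' / (2*(a-b)*x' + α) ∧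
        z = γ * x' / (2*(a-c)*x' + α) := by
      simpa [Prod.ext_iff] using heq
    have eu := mul_inv_cancel₀ hD1
    have ev := mul_inv_cancel₀ hD2
    refine ⟨?_, ?_, ?_⟩
    · linear_combination β * x * eu
    · linear_combination γ * x * ev
    · linear_combination β * γ * x * ((2*(a-b)*x + α)⁻¹ * ev - (2*(a-c)*x + α)⁻¹ * eu)
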